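/- Let A be an m×N real matrix. If k ≥ min over nonzero w in the null space of A of max(k₋(w), k₊(w)), then there exists a nonnegative vector x with at most k nonzero entries such that x is not the unique sparsest nonnegative solution of Az = Ax; i.e., there exists a nonnegative z ≠ x with Az = Ax and ‖z‖₀ ≤ ‖x‖₀. -/

import Mathlib

open Matrix Finset

noncomputable def sparsity {N : ℕ} (x : Fin N → ℝ) : ℕ :=
  (univ.filter (fun i => x i ≠ 0)).card

noncomputable def negCount {N : ℕ} (w : Fin N → ℝ) : ℕ :=
  (univ.filter (fun i => w i < 0)).card

noncomputable def posCount {N : ℕ} (w : Fin N → ℝ) : ℕ :=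
  (univ.filter (fun i => 0 < w i)).card

lemma sparsity_posPart {N : ℕ} (w : Fin N → ℝ) :
    sparsity (fun i => max (w i) 0) = posCount w := by
  unfold sparsity posCount
  congr 1
  ext i
  simp only [mem_filter, mem_univ, true_and]
  constructor
  · intro h
    rcases lt_trichotomy (w i) 0 with h1 | h1 | h1
    · exact absurd (max_eq_right h1.le) h
    · exact absurd (by simp [h1]) h
    · exact h1
  · intro h
    rw [max_eq_left h.le]; exact ne_of_gt h

lemma key {m N k : ℕ} (A : Matrix (Fin m) (Fin N) ℝ) (w : Fin N → ℝ)
    (h0 : A.mulVec w = 0) (hne : w ≠ 0) (hkk : posCount w ≤ k)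
    (hle : negCount w ≤ posCount w) :
    ∃ x z : Fin N → ℝ, (∀ i, 0 ≤ x i) ∧ sparsity x ≤ k ∧
      (∀ i, 0 ≤ z i) ∧ z ≠ x ∧ A.mulVec z = A.mulVec x ∧
      sparsity z ≤ sparsity x := by
  refine ⟨fun i => max (w i) 0, fun i => max (-(w i)) 0,
    fun i => le_max_right _ _, ?_, fun i => le_max_right _ _, ?_, ?_, ?_⟩
  · rw [sparsity_posPart]; exact hkk
  · intro h
    apply hne
    funext i
    have := congrFun h i
    try simp only at this
    rcases lt_trichotomy (w i) 0 with h1 | h1 | h1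
    · rw [max_eq_left (by linarith), max_eq_right h1.le] at this; linarith
    · exact h1
    · rw [max_eq_right (by linarith), max_eq_left h1.le] at this; linarith
  · have hxz : (fun i => max (w i) 0) - (fun i => max (-(w i)) 0) = w := by
      funext i
      simp only [Pi.sub_apply]
      rcases le_or_gt (w i) 0 with h1 | h1
      · rw [max_eq_right h1, max_eq_left (by linarith)]; ring
      · rw [max_eq_left h1.le, max_eq_right (by linarith)]; ring
    have := A.mulVec_sub (fun i => max (w i) 0) (fun i => max (-(w i)) 0)
    rw [hxz, h0] at this
    exact (eq_of_sub_eq_zero this.symm).symm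
  · calc sparsity (fun i => max (-(w i)) 0) = negCount w := by
          rw [sparsity_posPart (fun i => -(w i))]
          unfold posCount negCount; congr 1; ext i; simp
      _ ≤ posCount w := hle
      _ = sparsity (fun i => max (w i) 0) := (sparsity_posPart w).symm

theorem stmt1 {m N k : ℕ} (A : Matrix (Fin m) (Fin N) ℝ)
    (hk : ∃ w : Fin N → ℝ, A.mulVec w = 0 ∧ w ≠ 0 ∧
      max (negCount w) (posCount w) ≤ k) :
    ∃ x z : Fin N → ℝ, (∀ i, 0 ≤ x i) ∧ sparsity x ≤ k ∧
      (∀ i, 0 ≤ z i) ∧ z ≠ x ∧ A.mulVec z = A.mulVec x ∧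
      sparsity z ≤ sparsity x := by
  obtain ⟨w, h0, hne, hmax⟩ := hk
  have hnegneg : negCount (-w) = posCount w := by
    unfold negCount posCount; congr 1; ext i; simp
  have hpospos : posCount (-w) = negCount w := by
    unfold negCount posCount; congr 1; ext i; simp
  rcases le_or_gt (negCount w) (posCount w) with hle | hlt
  · exact key A w h0 hne (le_trans (le_max_right _ _) hmax) hle
  · refine key A (-w) ?_ (neg_ne_zero.mpr hne) ?_ ?_
    · rw [A.mulVec_neg, h0]; simp
    · rw [hpospos]; exact le_trans (le_max_left _ _) hmax
    · rw [hnegneg, hpospos]; exact hlt.le
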